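/- arXiv:math/0502510 — 3 statements merged into one kernel-verified Lean document; each statement's English description precedes it below -/
import Mathlib

section
/- Let $q \in \mathbb{N}$ and let $\varrho$ be an integer with $\varrho^2 \equiv -1 \pmod q$. Then for each non-zero integer $b$, there exist coprime integers $u, v$ with $v > 0$ such that $|b\varrho/q - u/v| \leq 1/(v\sqrt{2q})$ and $\sqrt{q/2}/|b| \leq v \leq \sqrt{2q}$. -/
/-- Diophantine approximation of `bϱ/q` where `ϱ² ≡ -1 (mod q)`. -/
theorem stmt_2 (q : ℕ) (hq : 0 < q) (ϱ : ℤ) (hϱ : (q : ℤ) ∣ ϱ ^ 2 + 1)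
    (b : ℤ) (hb : b ≠ 0) :
    ∃ u v : ℤ, 0 < v ∧ IsCoprime u v ∧
      |(b : ℝ) * ϱ / q - u / v| ≤ 1 / (v * Real.sqrt (2 * q)) ∧
      Real.sqrt (q / 2) / |(b : ℝ)| ≤ (v : ℝ) ∧ (v : ℝ) ≤ Real.sqrt (2 * q) := by
  have hq0 : (0:ℝ) < q := by exact_mod_cast hq
  have h2q : (0:ℝ) < Real.sqrt (2 * q) := Real.sqrt_pos.mpr (by positivity)
  have hq2 : (1:ℝ) ≤ Real.sqrt (2 * q) := by
    rw [show (1:ℝ) = Real.sqrt 1 by simp]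
    refine Real.sqrt_le_sqrt ?_
    have h1q : (1:ℝ) ≤ q := by exact_mod_cast hq
    linarith
  set ξ : ℝ := (b : ℝ) * ϱ / q with hξ
  set n : ℕ := ⌊Real.sqrt (2 * q)⌋₊ with hn
  have hn1 : 0 < n := Nat.le_floor (by exact_mod_cast hq2)
  obtain ⟨j, k, hk0, hkn, hjk⟩ := Real.exists_int_int_abs_mul_sub_le ξ hn1
  -- reduce to coprime u v
  set g : ℤ := (Int.gcd j k : ℤ) with hg
  have hkne : k ≠ 0 := hk0.ne'
  have hg0 : 0 < g := by
    rw [hg]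
    exact_mod_cast Int.gcd_pos_of_ne_zero_right j hkne
  set u : ℤ := j / g with hu
  set v : ℤ := k / g with hv
  have hju : g * u = j := Int.mul_ediv_cancel' (Int.gcd_dvd_left j k)
  have hkv : g * v = k := Int.mul_ediv_cancel' (Int.gcd_dvd_right j k)
  have hv0 : 0 < v := by nlinarith
  have hcop : IsCoprime u v := by
    rw [Int.isCoprime_iff_gcd_eq_one]
    apply Int.gcd_div_gcd_div_gcd
    exact Int.gcd_pos_of_ne_zero_right j hkne
  have hvk : v ≤ k := by nlinarith
  -- n+1 > sqrt(2q)
  have hfloor : Real.sqrt (2 * q) < (n : ℝ) + 1 := Nat.lt_floor_add_one _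
  have hvle : (v : ℝ) ≤ Real.sqrt (2 * q) := by
    have h1 : (v : ℝ) ≤ (k : ℝ) := by exact_mod_cast hvk
    have h2 : (k : ℝ) ≤ n := by exact_mod_cast hkn
    have h3 : (n : ℝ) ≤ Real.sqrt (2 * q) := Nat.floor_le h2q.le |>.trans_eq rfl
    linarith [Nat.floor_le (le_of_lt h2q) (R := ℝ)]
  -- key bound |v ξ - u| ≤ 1/sqrt(2q)
  have hgR : (1:ℝ) ≤ (g:ℝ) := by exact_mod_cast hg0
  have key : |(v : ℝ) * ξ - u| ≤ 1 / Real.sqrt (2 * q) := by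
    have e : (k : ℝ) * ξ - j = (g : ℝ) * ((v : ℝ) * ξ - u) := by
      rw [← hju, ← hkv]; push_cast; ring
    have h1 : |(v : ℝ) * ξ - u| ≤ |(k : ℝ) * ξ - j| := by
      rw [e, abs_mul, abs_of_pos (by linarith : (0:ℝ) < (g:ℝ))]
      nlinarith [abs_nonneg ((v : ℝ) * ξ - u)]
    have h2 : (1:ℝ) / (n + 1) ≤ 1 / Real.sqrt (2 * q) := by
      apply one_div_le_one_div_of_le h2q
      linarith
    linarith
  have hvR : (0:ℝ) < (v:ℝ) := by exact_mod_cast hv0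
  refine ⟨u, v, hv0, hcop, ?_, ?_, hvle⟩
  · have : ξ - (u : ℝ) / v = ((v : ℝ) * ξ - u) / v := by field_simp
    rw [this, abs_div, abs_of_pos hvR, div_le_div_iff₀ hvR (by positivity)]
    calc |(v : ℝ) * ξ - u| * (v * Real.sqrt (2*q)) 
        ≤ (1 / Real.sqrt (2*q)) * (v * Real.sqrt (2*q)) := by
          apply mul_le_mul_of_nonneg_right key; positivity
      _ = 1 * v := by field_simp
  · -- lower bound
    set r : ℤ := b * ϱ * v - q * u with hr
    obtain ⟨c, hc⟩ := hϱ
    have hdvd : (q : ℤ) ∣ r ^ 2 + b ^ 2 * v ^ 2 := by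
      refine ⟨b ^ 2 * v ^ 2 * c + q * u ^ 2 - 2 * b * ϱ * v * u, ?_⟩
      have : ϱ ^ 2 + 1 = q * c := hc
      rw [hr]; linear_combination (b^2 * v^2) * this
    have hpos : 0 < r ^ 2 + b ^ 2 * v ^ 2 := by positivity
    have hqle : (q : ℤ) ≤ r ^ 2 + b ^ 2 * v ^ 2 := Int.le_of_dvd hpos hdvd
    have hrR : (r : ℝ) = q * ((v : ℝ) * ξ - u) := by
      rw [hr, hξ]; push_cast; field_simp
    have hr2 : (r : ℝ) ^ 2 ≤ q / 2 := by
      have h1 : |(r : ℝ)| ≤ q / Real.sqrt (2 * q) := by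
        rw [hrR, abs_mul, abs_of_pos hq0]
        calc (q : ℝ) * |(v : ℝ) * ξ - u| ≤ q * (1 / Real.sqrt (2*q)) := by
              exact mul_le_mul_of_nonneg_left key hq0.le
          _ = q / Real.sqrt (2*q) := by ring
      have h2 : (r : ℝ)^2 ≤ (q / Real.sqrt (2*q))^2 := by
        nlinarith [abs_nonneg (r:ℝ), sq_abs (r:ℝ)]
      have h3 : (q / Real.sqrt (2*q))^2 = q / 2 := by
        rw [div_pow, Real.sq_sqrt (by positivity)]
        field_simp
      linarith [h3 ▸ h2]
    have hbv : (q : ℝ) / 2 ≤ ((b : ℝ) * v) ^ 2 := by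
      have : ((q:ℤ) : ℝ) ≤ ((r ^ 2 + b ^ 2 * v ^ 2 : ℤ) : ℝ) := by exact_mod_cast hqle
      push_cast at this
      nlinarith
    have hbvpos : (0:ℝ) < |(b:ℝ)| := by
      simp [abs_pos]; exact_mod_cast hb
    rw [div_le_iff₀ hbvpos]
    have : Real.sqrt (q / 2) ≤ |(b : ℝ) * v| := by
      rw [show |(b:ℝ)*v| = Real.sqrt ((((b:ℝ))*v)^2) by rw [Real.sqrt_sq_eq_abs]]
      exact Real.sqrt_le_sqrt hbv
    rw [abs_mul, abs_of_pos hvR] at this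
    linarith [this]
end

section
/- Let $q \in \mathbb{N}$, $\varrho$ an integer with $\varrho^2 \equiv -1 \pmod q$, $b$ a nonzero integer, and $v$ a positive integer with $v \leq \sqrt{2q}$ such that there exists an integer $u$ coprime to $v$ with $|b\varrho/q - u/v| \leq 1/(v\sqrt{2q})$. Then $v \geq \sqrt{q/2}/|b|$. -/
/-- Lower bound for the denominator of a good rational approximation to `bϱ/q`,
where `ϱ² ≡ -1 (mod q)`. -/
theorem stmt_3 (q : ℕ) (hq : 0 < q) (ϱ : ℤ) (hϱ : (q : ℤ) ∣ ϱ ^ 2 + 1)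
    (b : ℤ) (hb : b ≠ 0) (v : ℤ) (hv : 0 < v) (hv2 : (v : ℝ) ≤ Real.sqrt (2 * q))
    (hu : ∃ u : ℤ, IsCoprime u v ∧
      |(b : ℝ) * ϱ / q - u / v| ≤ 1 / (v * Real.sqrt (2 * q))) :
    Real.sqrt (q / 2) / |(b : ℝ)| ≤ (v : ℝ) := by
  obtain ⟨u, hcop, happ⟩ := hu
  have hqR : (0 : ℝ) < q := by exact_mod_cast hq
  have hvR : (0 : ℝ) < v := by exact_mod_cast hv
  have hs : (0 : ℝ) < Real.sqrt (2 * q) := Real.sqrt_pos.mpr (by positivity)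
  set r : ℤ := b * ϱ * v - q * u with hr
  -- bound |r| ≤ √(q/2)
  have hident : (b : ℝ) * ϱ / q - u / v = (r : ℝ) / (q * v) := by
    push_cast [hr]; field_simp
  have hrb : |(r : ℝ)| ≤ Real.sqrt (q / 2) := by
    have h1 : |(r : ℝ) / (q * v)| ≤ 1 / (v * Real.sqrt (2 * q)) := hident ▸ happ
    rw [abs_div, abs_of_pos (show (0:ℝ) < (q:ℝ)*v by positivity)] at h1
    have h2 : |(r : ℝ)| ≤ (1 / (v * Real.sqrt (2 * q))) * (q * v) :=
      (div_le_iff₀ (by positivity)).mp h1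
    calc |(r : ℝ)| ≤ (1 / (v * Real.sqrt (2 * q))) * (q * v) := h2
      _ = q / Real.sqrt (2 * q) := by field_simp
      _ = Real.sqrt (q / 2) := by
          rw [eq_comm, Real.sqrt_eq_iff_eq_sq] <;>
            [skip; positivity; positivity]
          rw [div_pow, Real.sq_sqrt (by positivity : (0:ℝ) ≤ 2 * q)]
          field_simp
  have hr2 : (r : ℝ) ^ 2 ≤ q / 2 := by
    have := sq_le_sq' (neg_le_of_abs_le hrb) (le_of_abs_le hrb)
    rwa [Real.sq_sqrt (by positivity : (0:ℝ) ≤ (q:ℝ) / 2)] at this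
  -- divisibility
  obtain ⟨k, hk⟩ := hϱ
  have hdvd : (q : ℤ) ∣ r ^ 2 + b ^ 2 * v ^ 2 :=
    ⟨b ^ 2 * v ^ 2 * k + q * u ^ 2 - 2 * b * ϱ * v * u, by
      rw [hr]; linear_combination (b ^ 2 * v ^ 2) * hk⟩
  have hpos : (0 : ℤ) < r ^ 2 + b ^ 2 * v ^ 2 := by positivity
  have hle : (q : ℤ) ≤ r ^ 2 + b ^ 2 * v ^ 2 := Int.le_of_dvd hpos hdvd
  have hleR : (q : ℝ) ≤ (r : ℝ) ^ 2 + (b : ℝ) ^ 2 * (v : ℝ) ^ 2 := by exact_mod_cast hle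
  have hbv : (q : ℝ) / 2 ≤ (|(b : ℝ)| * v) ^ 2 := by
    have : (|(b : ℝ)| * v) ^ 2 = (b : ℝ) ^ 2 * (v : ℝ) ^ 2 := by
      rw [mul_pow, sq_abs]
    rw [this]; linarith
  have hbR : (0 : ℝ) < |(b : ℝ)| := by
    simpa using abs_pos.mpr (show (b : ℝ) ≠ 0 by exact_mod_cast hb)
  rw [div_le_iff₀ hbR]
  calc Real.sqrt (q / 2) ≤ Real.sqrt ((|(b : ℝ)| * v) ^ 2) := Real.sqrt_le_sqrt hbv
    _ = |(b : ℝ)| * v := Real.sqrt_sq (by positivity)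
    _ = v * |(b : ℝ)| := mul_comm _ _
end

section
/- Let $(x_0, x_2, x_4)$ be a triple of nonzero integers with $\gcd(x_0, x_2, x_4) = 1$ and $x_2^2 x_4 = x_0^3$. Then there exist coprime integers $a, b$ such that $(x_0, x_2, x_4) = \pm(a^2 b, a^3, b^3)$. -/
/-- Primitive integer points on `x₂² x₄ = x₀³` with nonzero coordinates are
of the form `±(a²b, a³, b³)` with `a, b` coprime. -/
theorem stmt_7 (x0 x2 x4 : ℤ) (h0 : x0 ≠ 0) (h2 : x2 ≠ 0) (h4 : x4 ≠ 0)
    (hgcd : Int.gcd (Int.gcd x0 x2) x4 = 1) (heq : x2 ^ 2 * x4 = x0 ^ 3) :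
    ∃ a b : ℤ, IsCoprime a b ∧
      ((x0, x2, x4) = (a ^ 2 * b, a ^ 3, b ^ 3) ∨
       (x0, x2, x4) = (-(a ^ 2 * b), -(a ^ 3), -(b ^ 3))) := by
  -- x2 and x4 are coprime
  have hc24 : IsCoprime x2 x4 := by
    rw [Int.isCoprime_iff_gcd_eq_one]
    by_contra h
    obtain ⟨p, hp, hpd⟩ := Nat.exists_prime_and_dvd h
    have hp2 : (p : ℤ) ∣ x2 := (Int.natCast_dvd_natCast.mpr (hpd.trans (Nat.gcd_dvd_left _ _))).trans (Int.natAbs_dvd.mpr dvd_rfl)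
    have hp4 : (p : ℤ) ∣ x4 := (Int.natCast_dvd_natCast.mpr (hpd.trans (Nat.gcd_dvd_right _ _))).trans (Int.natAbs_dvd.mpr dvd_rfl)
    have hp0 : (p : ℤ) ∣ x0 := by
      have : (p : ℤ) ∣ x0 ^ 3 := heq ▸ dvd_mul_of_dvd_right hp4 _
      exact Int.Prime.dvd_pow' hp this
    have : (p : ℤ) ∣ 1 := by
      have h1 : (p : ℤ) ∣ Int.gcd x0 x2 := Int.dvd_coe_gcd hp0 hp2
      have h2' : (p : ℤ) ∣ Int.gcd (Int.gcd x0 x2) x4 := Int.dvd_coe_gcd h1 hp4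
      rwa [hgcd] at h2'
    exact hp.one_lt.ne' (Nat.dvd_one.mp (by exact_mod_cast this))
  have hodd : Odd 3 := ⟨1, by norm_num⟩
  obtain ⟨d, hd⟩ := Int.eq_pow_of_mul_eq_pow_odd_left (hc24.pow_left) hodd heq
  obtain ⟨e, he⟩ := Int.eq_pow_of_mul_eq_pow_odd_right (hc24.pow_left) hodd heq
  -- d ∣ x2 since d² ∣ d³ = x2²
  have hd0 : d ≠ 0 := by rintro rfl; simp at hd; exact h2 hd
  have hdvd : d ∣ x2 := by
    have : d ^ 2 ∣ x2 ^ 2 := hd ▸ pow_dvd_pow d (by norm_num)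
    exact (Int.pow_dvd_pow_iff (by norm_num : (2:ℕ) ≠ 0)).mp this
  obtain ⟨a, ha⟩ := hdvd
  have ha2 : a ^ 2 = d := by
    have h1 : d ^ 2 * a ^ 2 = d ^ 2 * d := by
      calc d ^ 2 * a ^ 2 = (d * a) ^ 2 := by ring
        _ = x2 ^ 2 := by rw [← ha]
        _ = d ^ 3 := hd
        _ = d ^ 2 * d := by ring
    exact mul_left_cancel₀ (pow_ne_zero 2 hd0) h1
  have ha3 : a ^ 3 = x2 := by
    have : a ^ 3 = a ^ 2 * a := by ring
    rw [this, ha2, ← ha]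
  -- x0 = a² * e
  have hx0 : x0 = a ^ 2 * e := by
    have h3 : x0 ^ 3 = (a ^ 2 * e) ^ 3 := by
      rw [← heq, ← ha3, he]; ring
    have := Odd.strictMono_pow (R := ℤ) hodd |>.injective h3
    exact this
  refine ⟨a, e, ?_, Or.inl ?_⟩
  · have := hc24
    rw [← ha3, he] at this
    exact IsCoprime.of_isCoprime_of_dvd_right
      (IsCoprime.of_isCoprime_of_dvd_left this (dvd_pow_self a (by norm_num)))
      (dvd_pow_self e (by norm_num))
  · simp [hx0, ha3, he]
end
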